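/- Let G = SU(2), n ≥ 2, and for 1 ≤ m ≤ n−1 define R_m, R'_m : G^n → G^n by (R_m(g))_m = g_m g_{m+1} g_m⁻¹, (R_m(g))_{m+1} = g_m, (R'_m(g))_m = g_{m+1}, (R'_m(g))_{m+1} = g_{m+1}⁻¹ g_m g_{m+1}, both fixing all other coordinates. For 1 ≤ i < j ≤ n set A_{ij} = R_{j−1} ∘ ⋯ ∘ R_{i+1} ∘ R_i ∘ R_i ∘ R'_{i+1} ∘ ⋯ ∘ R'_{j−1}. Then for every g ∈ G^n, writing h = g_i g_j and w = h g_j h⁻¹ g_j⁻¹: (A_{ij}(g))_k = g_k for k < i or k > j; (A_{ij}(g))_k = h g_k h⁻¹ for k = i and k = j; and (A_{ij}(g))_k = w g_k w⁻¹ for i < k < j. -/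

import Mathlib

open Matrix

/-- `SU2` is the special unitary group of 2×2 complex matrices,
identified with the 3-sphere `S³`. -/
abbrev SU2 : Submonoid (Matrix (Fin 2) (Fin 2) ℂ) := Matrix.specialUnitaryGroup (Fin 2) ℂ

noncomputable instance : Group SU2 :=
  { (inferInstance : Monoid SU2) with
    inv := fun A => ⟨star A.1, by
      obtain ⟨hu, hd⟩ := Matrix.mem_specialUnitaryGroup_iff.mp A.2
      refine Matrix.mem_specialUnitaryGroup_iff.mpr ⟨Unitary.star_mem hu, ?_⟩
      rw [Matrix.star_eq_conjTranspose, Matrix.det_conjTranspose, hd, star_one]⟩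
    inv_mul_cancel := fun A => Subtype.ext A.2.1.1 }

/-- The braid move `R_m` (1-indexed, `1 ≤ m ≤ n−1`): replace the pair at positions
`(m, m+1)` by `(g_m g_{m+1} g_m⁻¹, g_m)`, fixing all other coordinates. -/
noncomputable def Rbraid (n m : ℕ) (g : Fin n → SU2) : Fin n → SU2 := fun k =>
  if hm : 1 ≤ m ∧ m + 1 ≤ n then
    if (k : ℕ) + 1 = m then g k * g ⟨m, by omega⟩ * (g k)⁻¹
    else if (k : ℕ) = m then g ⟨m - 1, by omega⟩
    else g k
  else g k

/-- The inverse braid move `R'_m`: replace the pair at positions `(m, m+1)` by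
`(g_{m+1}, g_{m+1}⁻¹ g_m g_{m+1})`, fixing all other coordinates. -/
noncomputable def Rbraid' (n m : ℕ) (g : Fin n → SU2) : Fin n → SU2 := fun k =>
  if hm : 1 ≤ m ∧ m + 1 ≤ n then
    if (k : ℕ) + 1 = m then g ⟨m, by omega⟩
    else if (k : ℕ) = m then (g k)⁻¹ * g ⟨m - 1, by omega⟩ * g k
    else g k
  else g k

/-- The pure braid generator
`A_{ij} = R_{j−1} ∘ ⋯ ∘ R_{i+1} ∘ R_i ∘ R_i ∘ R'_{i+1} ∘ ⋯ ∘ R'_{j−1}`. -/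
noncomputable def Aij (n i j : ℕ) : (Fin n → SU2) → (Fin n → SU2) :=
  (((List.range' (i + 1) (j - 1 - i)).reverse.map (Rbraid n))
      ++ [Rbraid n i, Rbraid n i]
      ++ ((List.range' (i + 1) (j - 1 - i)).map (Rbraid' n))).foldr (· ∘ ·) id

lemma Rbraid_apply (n m : ℕ) (h1 : 1 ≤ m) (h2 : m + 1 ≤ n) (g : Fin n → SU2) (k : Fin n) :
    Rbraid n m g k =
      if (k : ℕ) + 1 = m then g k * g ⟨m, by omega⟩ * (g k)⁻¹
      else if (k : ℕ) = m then g ⟨m - 1, by omega⟩ else g k := by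
  simp only [Rbraid, dif_pos (And.intro h1 h2)]

lemma Rbraid'_apply (n m : ℕ) (h1 : 1 ≤ m) (h2 : m + 1 ≤ n) (g : Fin n → SU2) (k : Fin n) :
    Rbraid' n m g k =
      if (k : ℕ) + 1 = m then g ⟨m, by omega⟩
      else if (k : ℕ) = m then (g k)⁻¹ * g ⟨m - 1, by omega⟩ * g k else g k := by
  simp only [Rbraid', dif_pos (And.intro h1 h2)]

lemma myFoldrAppend {α : Type*} (l1 l2 : List ((α → α))) :
    (l1 ++ l2).foldr (· ∘ ·) id = l1.foldr (· ∘ ·) id ∘ l2.foldr (· ∘ ·) id := by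
  induction l1 with
  | nil => rfl
  | cons a l ih => simp only [List.cons_append, List.foldr_cons, ih]; rfl

lemma Aij_base (n i : ℕ) : Aij n i (i + 1) = Rbraid n i ∘ Rbraid n i := by
  have : i + 1 - 1 - i = 0 := by omega
  rw [Aij, this]
  rfl

lemma Aij_succ (n i j : ℕ) (hij : i < j) :
    Aij n i (j + 1) = Rbraid n j ∘ Aij n i j ∘ Rbraid' n j := by
  have h1 : j + 1 - 1 - i = (j - 1 - i) + 1 := by omega
  have h2 : i + 1 + (j - 1 - i) = j := by omega
  rw [Aij, h1, List.range'_1_concat, h2, Aij]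
  simp only [List.reverse_append, List.map_append, List.reverse_cons, List.reverse_nil,
    List.nil_append, List.map_cons, List.map_nil, List.cons_append,
    myFoldrAppend, List.foldr_cons, List.foldr_nil]
  ext g k
  simp [Function.comp]

lemma gcast {n : ℕ} (g : Fin n → SU2) {k k' : Fin n} (h : (k : ℕ) = (k' : ℕ)) : g k = g k' := by
  congr 1; exact Fin.ext h

lemma Rbraid_left (n m : ℕ) (h1 : 1 ≤ m) (h2 : m + 1 ≤ n) (g : Fin n → SU2) (k : Fin n)
    (hk : (k : ℕ) + 1 = m) :
    Rbraid n m g k = g k * g ⟨m, by omega⟩ * (g k)⁻¹ := by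
  rw [Rbraid_apply n m h1 h2, if_pos hk]

lemma Rbraid_mid (n m : ℕ) (h1 : 1 ≤ m) (h2 : m + 1 ≤ n) (g : Fin n → SU2) (k : Fin n)
    (hk : (k : ℕ) = m) :
    Rbraid n m g k = g ⟨m - 1, by omega⟩ := by
  rw [Rbraid_apply n m h1 h2, if_neg (by omega), if_pos hk]

lemma Rbraid_other (n m : ℕ) (g : Fin n → SU2) (k : Fin n)
    (hk1 : (k : ℕ) + 1 ≠ m) (hk2 : (k : ℕ) ≠ m) :
    Rbraid n m g k = g k := by
  unfold Rbraid
  split_ifs <;> rfl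

lemma Rbraid'_left (n m : ℕ) (h1 : 1 ≤ m) (h2 : m + 1 ≤ n) (g : Fin n → SU2) (k : Fin n)
    (hk : (k : ℕ) + 1 = m) :
    Rbraid' n m g k = g ⟨m, by omega⟩ := by
  rw [Rbraid'_apply n m h1 h2, if_pos hk]

lemma Rbraid'_mid (n m : ℕ) (h1 : 1 ≤ m) (h2 : m + 1 ≤ n) (g : Fin n → SU2) (k : Fin n)
    (hk : (k : ℕ) = m) :
    Rbraid' n m g k = (g k)⁻¹ * g ⟨m - 1, by omega⟩ * g k := by
  rw [Rbraid'_apply n m h1 h2, if_neg (by omega), if_pos hk]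

lemma Rbraid'_other (n m : ℕ) (g : Fin n → SU2) (k : Fin n)
    (hk1 : (k : ℕ) + 1 ≠ m) (hk2 : (k : ℕ) ≠ m) :
    Rbraid' n m g k = g k := by
  unfold Rbraid'
  split_ifs <;> rfl

lemma Aij_aux (n i : ℕ) (hi : 1 ≤ i) :
    ∀ j (hj1 : i < j) (hj2 : j ≤ n) (g : Fin n → SU2) (k : Fin n),
      (((k : ℕ) + 1 < i ∨ j < (k : ℕ) + 1) → Aij n i j g k = g k) ∧
      (((k : ℕ) + 1 = i ∨ (k : ℕ) + 1 = j) →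
        Aij n i j g k =
          (g ⟨i - 1, by omega⟩ * g ⟨j - 1, by omega⟩) * g k *
            (g ⟨i - 1, by omega⟩ * g ⟨j - 1, by omega⟩)⁻¹) ∧
      ((i < (k : ℕ) + 1 ∧ (k : ℕ) + 1 < j) →
        Aij n i j g k =
          ((g ⟨i - 1, by omega⟩ * g ⟨j - 1, by omega⟩) * g ⟨j - 1, by omega⟩ *
              (g ⟨i - 1, by omega⟩ * g ⟨j - 1, by omega⟩)⁻¹ * (g ⟨j - 1, by omega⟩)⁻¹) * g k *
            ((g ⟨i - 1, by omega⟩ * g ⟨j - 1, by omega⟩) * g ⟨j - 1, by omega⟩ *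
              (g ⟨i - 1, by omega⟩ * g ⟨j - 1, by omega⟩)⁻¹ * (g ⟨j - 1, by omega⟩)⁻¹)⁻¹) := by
  intro j hj1
  induction j, hj1 using Nat.le_induction with
  | base =>
    intro hj2 g k
    rw [Aij_base]
    simp only [Function.comp_apply, Nat.add_sub_cancel, Nat.succ_sub_one]
    have hin : i + 1 ≤ n := hj2
    refine ⟨?_, ?_, ?_⟩
    · intro hk
      rw [Rbraid_other n i _ k (by omega) (by omega),
          Rbraid_other n i g k (by omega) (by omega)]
    · intro hk
      rcases hk with hk | hk
      · -- k.val = i - 1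
        rw [Rbraid_left n i hi hin _ k hk,
            Rbraid_left n i hi hin g k hk,
            Rbraid_mid n i hi hin g ⟨i, by omega⟩ rfl,
            gcast g (show (k : ℕ) = ((⟨i - 1, by omega⟩ : Fin n) : ℕ) by simp; omega)]
        group
      · -- k.val = i
        rw [Rbraid_mid n i hi hin _ k (by omega),
            Rbraid_left n i hi hin g ⟨i - 1, by omega⟩ (by simp; omega),
            gcast g (show (k : ℕ) = ((⟨i, by omega⟩ : Fin n) : ℕ) by simp; omega)]
        group
    · intro hk
      omega
  | succ j hj1 ih =>
    intro hj2 g k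
    have hijlt : i < j := hj1
    have hjn : j + 1 ≤ n := hj2
    have h1j : 1 ≤ j := by omega
    rw [Aij_succ n i j hijlt]
    simp only [Function.comp_apply, Nat.add_sub_cancel]
    have hg'i : Rbraid' n j g ⟨i - 1, by omega⟩ = g ⟨i - 1, by omega⟩ :=
      Rbraid'_other n j g _ (by simp; omega) (by simp; omega)
    have hg'j1 : Rbraid' n j g ⟨j - 1, by omega⟩ = g ⟨j, by omega⟩ := by
      rw [Rbraid'_left n j h1j hjn g _ (by simp; omega)]
    have hg'j : Rbraid' n j g ⟨j, by omega⟩ =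
        (g ⟨j, by omega⟩)⁻¹ * g ⟨j - 1, by omega⟩ * g ⟨j, by omega⟩ := by
      rw [Rbraid'_mid n j h1j hjn g _ (by simp)]
    obtain ⟨ihk1, ihk2, ihk3⟩ := ih (by omega) (Rbraid' n j g) k
    obtain ⟨ihj1, -, -⟩ := ih (by omega) (Rbraid' n j g) ⟨j, by omega⟩
    obtain ⟨-, ihjm2, -⟩ := ih (by omega) (Rbraid' n j g) ⟨j - 1, by omega⟩
    refine ⟨?_, ?_, ?_⟩
    · intro hk
      rw [Rbraid_other n j _ k (by omega) (by omega), ihk1 (by omega),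
          Rbraid'_other n j g k (by omega) (by omega)]
    · intro hk
      rcases hk with hk | hk
      · -- k + 1 = i
        rw [Rbraid_other n j _ k (by omega) (by omega), ihk2 (Or.inl hk), hg'i, hg'j1,
            Rbraid'_other n j g k (by omega) (by omega)]
      · -- k = j
        rw [Rbraid_mid n j h1j hjn _ k (by omega), ihjm2 (Or.inr (by simp; omega)),
            hg'i, hg'j1, gcast g (show (k : ℕ) = ((⟨j, by omega⟩ : Fin n) : ℕ) by simp; omega)]
    · intro hk
      by_cases hkj : (k : ℕ) + 1 = j
      · -- new coordinate: k = j - 1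
        rw [Rbraid_left n j h1j hjn _ k hkj,
            ihk2 (Or.inr hkj),
            ihj1 (Or.inr (by simp)),
            hg'i, hg'j,
            gcast (Rbraid' n j g) (show (k : ℕ) = ((⟨j - 1, by omega⟩ : Fin n) : ℕ) by simp; omega),
            hg'j1,
            gcast g (show (k : ℕ) = ((⟨j - 1, by omega⟩ : Fin n) : ℕ) by simp; omega)]
        group
      · -- i < k+1 < j
        rw [Rbraid_other n j _ k (by omega) (by omega),
            ihk3 ⟨hk.1, by omega⟩, hg'i, hg'j1,
            Rbraid'_other n j g k (by omega) (by omega)]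

/-- Explicit formula for `A_{ij}`: with `h = g_i g_j` and `w = h g_j h⁻¹ g_j⁻¹`,
the coordinates `i` and `j` are conjugated by `h`, the intermediate ones by `w`,
and the others are fixed. -/
theorem Aij_explicit (n : ℕ) (hn : 2 ≤ n) (i j : ℕ) (hi : 1 ≤ i) (hij : i < j) (hj : j ≤ n)
    (g : Fin n → SU2) (h w : SU2)
    (hh : h = g ⟨i - 1, by omega⟩ * g ⟨j - 1, by omega⟩)
    (hw : w = h * g ⟨j - 1, by omega⟩ * h⁻¹ * (g ⟨j - 1, by omega⟩)⁻¹) :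
    ∀ k : Fin n,
      (((k : ℕ) + 1 < i ∨ j < (k : ℕ) + 1) → Aij n i j g k = g k) ∧
      (((k : ℕ) + 1 = i ∨ (k : ℕ) + 1 = j) → Aij n i j g k = h * g k * h⁻¹) ∧
      ((i < (k : ℕ) + 1 ∧ (k : ℕ) + 1 < j) → Aij n i j g k = w * g k * w⁻¹) := by
  subst hw
  subst hh
  intro k
  exact Aij_aux n i hi j hij hj g k
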